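/- Gordan's theorem: for any real m × n matrix A, exactly one of the following holds: (1) there exists v ∈ ℝᵐ with every entry of vᵀA strictly positive; (2) there exists a nonzero u ∈ ℝⁿ with u ≥ 0 componentwise and A·u = 0. -/

import Mathlib

theorem gordan (m n : ℕ) (A : Matrix (Fin m) (Fin n) ℝ) :
    Xor' (∃ v : Fin m → ℝ, ∀ j, 0 < Matrix.vecMul v A j)
      (∃ u : Fin n → ℝ, u ≠ 0 ∧ (∀ j, 0 ≤ u j) ∧ A.mulVec u = 0) := by
  have hexcl : ¬ ((∃ v : Fin m → ℝ, ∀ j, 0 < Matrix.vecMul v A j) ∧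
      (∃ u : Fin n → ℝ, u ≠ 0 ∧ (∀ j, 0 ≤ u j) ∧ A.mulVec u = 0)) := by
    rintro ⟨⟨v, hv⟩, ⟨u, hu0, hunn, hAu⟩⟩
    have key : dotProduct (Matrix.vecMul v A) u = 0 := by
      rw [← Matrix.dotProduct_mulVec, hAu, dotProduct_zero]
    obtain ⟨j, hj⟩ : ∃ j, u j ≠ 0 := by
      by_contra h
      push_neg at h
      exact hu0 (funext h)
    have hj' : 0 < u j := lt_of_le_of_ne (hunn j) (Ne.symm hj)
    have hpos : 0 < dotProduct (Matrix.vecMul v A) u := by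
      apply Finset.sum_pos' (fun k _ => mul_nonneg (hv k).le (hunn k))
      exact ⟨j, Finset.mem_univ j, mul_pos (hv j) hj'⟩
    rw [key] at hpos
    exact lt_irrefl 0 hpos
  by_cases h2 : ∃ u : Fin n → ℝ, u ≠ 0 ∧ (∀ j, 0 ≤ u j) ∧ A.mulVec u = 0
  · exact Or.inr ⟨h2, fun h1 => hexcl ⟨h1, h2⟩⟩
  · refine Or.inl ⟨?_, h2⟩
    -- separate 0 from the image of the standard simplex under mulVec
    set S : Set (Fin m → ℝ) := A.mulVecLin '' stdSimplex ℝ (Fin n) with hS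
    have hconv : Convex ℝ S := (convex_stdSimplex ℝ _).linear_image _
    have hcomp : IsCompact S :=
      (isCompact_stdSimplex _ _).image A.mulVecLin.continuous_of_finiteDimensional
    have h0 : (0 : Fin m → ℝ) ∉ S := by
      rintro ⟨w, ⟨hwnn, hwsum⟩, hw⟩
      apply h2
      refine ⟨w, ?_, hwnn, hw⟩
      intro hw0
      rw [hw0] at hwsum
      simp at hwsum
    obtain ⟨f, c, hc0, hcS⟩ :=
      geometric_hahn_banach_point_closed hconv hcomp.isClosed h0
    rw [map_zero] at hc0
    refine ⟨fun i => f (Pi.single i 1), fun j => ?_⟩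
    have hcol : (fun i => A i j) ∈ S := by
      refine ⟨Pi.single j 1, single_mem_stdSimplex ℝ j, ?_⟩
      ext i
      simp [Matrix.mulVecLin_apply]
    have hfc : f (fun i => A i j) = Matrix.vecMul (fun i => f (Pi.single i 1)) A j := by
      have := pi_eq_sum_univ (fun i => A i j)
      rw [this, map_sum]
      rw [Matrix.vecMul, dotProduct]
      congr 1
      ext i
      rw [map_smul, smul_eq_mul, mul_comm]
      congr 2
      ext k
      simp [Pi.single_apply, eq_comm]
    calc (0 : ℝ) < c := hc0
    _ < f (fun i => A i j) := hcS _ hcol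
    _ = _ := hfc
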